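/- arXiv:1805.07617 — 4 statements merged into one kernel-verified Lean document; each statement's English description precedes it below -/
import Mathlib

section
/- Let H be a complex Hilbert space, D and A bounded self-adjoint operators on H, and let φ : ℝ → ℂ be given by φ(x) = (1/2π) ∫_ℝ φ̂(s) e^{isx} ds for an integrable function φ̂ with ∫_ℝ |s·φ̂(s)| ds < ∞. Then the commutator [φ(D), A] (where φ(D) = (1/2π)∫ φ̂(s) e^{isD} ds) satisfies the norm bound ‖[φ(D), A]‖ ≤ (1/2π) (∫_ℝ |s φ̂(s)| ds) · ‖[D, A]‖. -/
open NormedSpace MeasureTheory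

set_option maxHeartbeats 1000000
set_option synthInstance.maxHeartbeats 400000

lemma aux_norm_exp_eq_one {H : Type*} [NormedAddCommGroup H]
    [InnerProductSpace ℂ H] [CompleteSpace H] [Nontrivial H]
    (D : H →L[ℂ] H) (hD : IsSelfAdjoint D) (t : ℝ) :
    ‖exp ((Complex.I * (t : ℂ)) • D)‖ = 1 := by
  have hsa : IsSelfAdjoint (t • D) := by
    rw [IsSelfAdjoint, star_smul, star_trivial, hD.star_eq]
  have h := CStarRing.norm_coe_unitary (selfAdjoint.expUnitary ⟨t • D, hsa⟩)
  rw [selfAdjoint.expUnitary_coe] at h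
  have heq : (Complex.I * (t : ℂ)) • D = Complex.I • ((⟨t • D, hsa⟩ : selfAdjoint (H →L[ℂ] H)) : H →L[ℂ] H) := by
    show (Complex.I * (t : ℂ)) • D = Complex.I • (t • D)
    rw [mul_smul, ← Complex.coe_algebraMap, algebraMap_smul]
  rw [heq]
  exact h

lemma aux_commutator_exp_le {H : Type*} [NormedAddCommGroup H]
    [InnerProductSpace ℂ H] [CompleteSpace H] [Nontrivial H]
    (D A : H →L[ℂ] H) (hD : IsSelfAdjoint D) (s : ℝ) :
    ‖exp ((Complex.I * (s : ℂ)) • D) * A - A * exp ((Complex.I * (s : ℂ)) • D)‖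
      ≤ |s| * ‖D * A - A * D‖ := by
  letI : NormedAlgebra ℚ (H →L[ℂ] H) := .restrictScalars ℚ ℂ _
  set x : H →L[ℂ] H := Complex.I • D with hx
  have hconv : ∀ t : ℝ, (Complex.I * (t : ℂ)) • D = t • x := by
    intro t
    rw [hx, mul_smul, smul_comm t Complex.I D, ← Complex.coe_algebraMap, algebraMap_smul]
  set E : ℝ → (H →L[ℂ] H) := fun t => exp (t • x) with hE
  have hEeq : ∀ t : ℝ, E t = exp ((Complex.I * (t : ℂ)) • D) := by
    intro t
    rw [hconv t, hE]
  have hnorm : ∀ t : ℝ, ‖E t‖ = 1 := fun t => by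
    rw [hEeq t]; exact aux_norm_exp_eq_one D hD t
  have hderiv : ∀ t : ℝ, HasDerivAt E (x * E t) t := fun t =>
    hasDerivAt_exp_smul_const' x t
  have hderivneg : ∀ t : ℝ, HasDerivAt (fun u : ℝ => E (-u)) ((-1 : ℝ) • (E (-t) * x)) t :=
    fun t => (hasDerivAt_exp_smul_const x (-t)).scomp t (hasDerivAt_neg t)
  have hcomm : ∀ t : ℝ, Commute x (E t) := fun t =>
    ((Commute.refl x).smul_right t).exp_right
  have hEinv : ∀ t : ℝ, E (-t) * E t = 1 := by
    intro t
    have hc : Commute ((-t) • x) (t • x) := ((Commute.refl x).smul_left _).smul_right _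
    rw [hE]
    rw [← exp_add_of_commute hc, ← add_smul, neg_add_cancel, zero_smul, exp_zero]
  have hE0 : E 0 = 1 := by
    show exp ((0 : ℝ) • x) = 1
    rw [zero_smul, exp_zero]
  set G : ℝ → (H →L[ℂ] H) := fun t => E t * A * E (-t) with hG
  have hGderiv : ∀ t : ℝ, HasDerivAt G (E t * (x * A - A * x) * E (-t)) t := by
    intro t
    have h := ((hderiv t).mul_const A).mul (hderivneg t)
    refine h.congr_deriv ?_
    rw [(hcomm t).eq, ← (hcomm (-t)).eq]
    simp only [neg_smul, one_smul]
    noncomm_ring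
  have hxA : x * A - A * x = Complex.I • (D * A - A * D) := by
    rw [hx, smul_mul_assoc, mul_smul_comm, smul_sub]
  have hnormxA : ‖x * A - A * x‖ = ‖D * A - A * D‖ := by
    rw [hxA, norm_smul, Complex.norm_I, one_mul]
  have hbound : ∀ t : ℝ, ‖E t * (x * A - A * x) * E (-t)‖ ≤ ‖D * A - A * D‖ := by
    intro t
    calc ‖E t * (x * A - A * x) * E (-t)‖
        ≤ ‖E t * (x * A - A * x)‖ * ‖E (-t)‖ := norm_mul_le _ _
      _ ≤ ‖E t‖ * ‖x * A - A * x‖ * ‖E (-t)‖ :=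
          mul_le_mul_of_nonneg_right (norm_mul_le _ _) (norm_nonneg _)
      _ = ‖D * A - A * D‖ := by rw [hnorm t, hnorm (-t), hnormxA, one_mul, mul_one]
  have hmv : ‖G s - G 0‖ ≤ ‖D * A - A * D‖ * ‖s - (0 : ℝ)‖ :=
    Convex.norm_image_sub_le_of_norm_hasDerivWithin_le
      (fun t _ => (hGderiv t).hasDerivWithinAt)
      (fun t _ => hbound t) convex_univ (Set.mem_univ 0) (Set.mem_univ s)
  have hG0 : G 0 = A := by
    show E 0 * A * E (-0) = A
    rw [neg_zero, hE0, one_mul, mul_one]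
  have hfact : E s * A - A * E s = (G s - A) * E s := by
    have : G s * E s = E s * A := by
      rw [hG]
      calc E s * A * E (-s) * E s = E s * A * (E (-s) * E s) := by rw [mul_assoc]
        _ = E s * A := by rw [hEinv s, mul_one]
    rw [sub_mul, this]
  calc ‖exp ((Complex.I * (s : ℂ)) • D) * A - A * exp ((Complex.I * (s : ℂ)) • D)‖
      = ‖E s * A - A * E s‖ := by rw [hEeq s]
    _ = ‖(G s - A) * E s‖ := by rw [hfact]
    _ ≤ ‖G s - A‖ * ‖E s‖ := norm_mul_le _ _
    _ = ‖G s - G 0‖ := by rw [hnorm s, mul_one, hG0]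
    _ ≤ ‖D * A - A * D‖ * ‖s - (0 : ℝ)‖ := hmv
    _ = |s| * ‖D * A - A * D‖ := by rw [sub_zero, Real.norm_eq_abs, mul_comm]

/-- with `φ(D) = (1/2π)∫ φ̂(s) e^{isD} ds`, one has
`‖[φ(D), A]‖ ≤ (1/2π)(∫ |s φ̂(s)| ds) ‖[D, A]‖`. -/
theorem norm_commutator_smooth_function_le {H : Type*} [NormedAddCommGroup H]
    [InnerProductSpace ℂ H] [CompleteSpace H]
    (D A : H →L[ℂ] H) (hD : IsSelfAdjoint D) (hA : IsSelfAdjoint A)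
    (φhat : ℝ → ℂ) (h1 : Integrable φhat)
    (h2 : Integrable (fun s : ℝ => |s| * ‖φhat s‖)) :
    ‖((2 * Real.pi)⁻¹ • ∫ s : ℝ, φhat s • exp ((Complex.I * s) • D)) * A -
        A * ((2 * Real.pi)⁻¹ • ∫ s : ℝ, φhat s • exp ((Complex.I * s) • D))‖ ≤
      (2 * Real.pi)⁻¹ * (∫ s : ℝ, |s| * ‖φhat s‖) * ‖D * A - A * D‖ := by
  have hRHS : 0 ≤ (2 * Real.pi)⁻¹ * (∫ s : ℝ, |s| * ‖φhat s‖) * ‖D * A - A * D‖ := by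
    apply mul_nonneg (mul_nonneg (by positivity) _) (norm_nonneg _)
    exact integral_nonneg fun s => by positivity
  rcases subsingleton_or_nontrivial H with hH | hH
  · have h0 : ((2 * Real.pi)⁻¹ • ∫ s : ℝ, φhat s • exp ((Complex.I * s) • D)) * A -
        A * ((2 * Real.pi)⁻¹ • ∫ s : ℝ, φhat s • exp ((Complex.I * s) • D)) = 0 :=
      Subsingleton.elim _ _
    rw [h0, norm_zero]
    exact hRHS
  set c : ℝ := (2 * Real.pi)⁻¹ with hc
  have hcpos : 0 ≤ c := by positivity
  set f : ℝ → (H →L[ℂ] H) := fun s => φhat s • exp ((Complex.I * s) • D) with hf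
  letI : NormedAlgebra ℚ (H →L[ℂ] H) := .restrictScalars ℚ ℂ _
  have hcont : Continuous fun s : ℝ => exp ((Complex.I * (s : ℂ)) • D) :=
    exp_continuous.comp ((continuous_const.mul Complex.continuous_ofReal).smul continuous_const)
  have hfnorm : ∀ s : ℝ, ‖f s‖ = ‖φhat s‖ := by
    intro s
    rw [hf]
    simp only
    rw [norm_smul, aux_norm_exp_eq_one D hD s, mul_one]
  have hf_int : Integrable f := by
    refine h1.norm.mono' (h1.aestronglyMeasurable.smul hcont.aestronglyMeasurable) ?_
    filter_upwards with s
    rw [hfnorm s]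
  have hfA_int : Integrable (fun s => f s * A) :=
    ((ContinuousLinearMap.mul ℂ (H →L[ℂ] H)).flip A).integrable_comp hf_int
  have hAf_int : Integrable (fun s => A * f s) :=
    (ContinuousLinearMap.mul ℂ (H →L[ℂ] H) A).integrable_comp hf_int
  have hXA : (∫ s : ℝ, f s) * A = ∫ s : ℝ, f s * A :=
    (((ContinuousLinearMap.mul ℂ (H →L[ℂ] H)).flip A).integral_comp_comm hf_int).symm
  have hAX : A * (∫ s : ℝ, f s) = ∫ s : ℝ, A * f s :=
    ((ContinuousLinearMap.mul ℂ (H →L[ℂ] H) A).integral_comp_comm hf_int).symm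
  have hsplit : (c • ∫ s : ℝ, f s) * A - A * (c • ∫ s : ℝ, f s)
      = c • ∫ s : ℝ, φhat s •
          (exp ((Complex.I * s) • D) * A - A * exp ((Complex.I * s) • D)) := by
    rw [smul_mul_assoc, mul_smul_comm, ← smul_sub]
    congr 1
    rw [hXA, hAX, ← integral_sub hfA_int hAf_int]
    congr 1
    ext s
    rw [hf]
    simp only
    rw [smul_mul_assoc, mul_smul_comm, smul_sub]
  have key : ∀ s : ℝ,
      ‖φhat s • (exp ((Complex.I * s) • D) * A - A * exp ((Complex.I * s) • D))‖
        ≤ |s| * ‖φhat s‖ * ‖D * A - A * D‖ := by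
    intro s
    rw [norm_smul]
    calc ‖φhat s‖ * ‖exp ((Complex.I * s) • D) * A - A * exp ((Complex.I * s) • D)‖
        ≤ ‖φhat s‖ * (|s| * ‖D * A - A * D‖) :=
          mul_le_mul_of_nonneg_left (aux_commutator_exp_le D A hD s) (norm_nonneg _)
      _ = |s| * ‖φhat s‖ * ‖D * A - A * D‖ := by ring
  calc ‖(c • ∫ s : ℝ, f s) * A - A * (c • ∫ s : ℝ, f s)‖
      = c * ‖∫ s : ℝ, φhat s •
          (exp ((Complex.I * s) • D) * A - A * exp ((Complex.I * s) • D))‖ := by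
        rw [hsplit, norm_smul, Real.norm_eq_abs, abs_of_nonneg hcpos]
    _ ≤ c * ∫ s : ℝ, ‖φhat s •
          (exp ((Complex.I * s) • D) * A - A * exp ((Complex.I * s) • D))‖ :=
        mul_le_mul_of_nonneg_left (norm_integral_le_integral_norm _) hcpos
    _ ≤ c * ∫ s : ℝ, |s| * ‖φhat s‖ * ‖D * A - A * D‖ := by
        apply mul_le_mul_of_nonneg_left _ hcpos
        apply integral_mono_of_nonneg
        · filter_upwards with s; exact norm_nonneg _
        · exact h2.mul_const _
        · filter_upwards with s; exact key s
    _ = c * ((∫ s : ℝ, |s| * ‖φhat s‖) * ‖D * A - A * D‖) := by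
        rw [integral_mul_const]
    _ = (2 * Real.pi)⁻¹ * (∫ s : ℝ, |s| * ‖φhat s‖) * ‖D * A - A * D‖ := by
        rw [hc, mul_assoc]
end

section
/- Let φ(x) = (2/√π) ∫₀ˣ e^{−s²} ds be the error function. Then the function ψ : ℝ → ℂ defined by ψ(x) = 1 − exp(π i (φ(x) + 1)) is a Schwartz function: for all j, k ∈ ℕ, x^k ψ^{(j)}(x) is bounded on ℝ. -/
/-- The error function `φ(x) = (2/√π) ∫₀ˣ e^{−s²} ds`. -/
noncomputable def erfFun (x : ℝ) : ℝ :=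
  (2 / Real.sqrt Real.pi) * ∫ s in (0 : ℝ)..x, Real.exp (-s ^ 2)

/-- `ψ(x) = 1 − exp(πi(φ(x)+1))` for the error function `φ`. -/
noncomputable def psiFun (x : ℝ) : ℂ :=
  1 - Complex.exp (Real.pi * Complex.I * ((erfFun x : ℂ) + 1))

open Real MeasureTheory Set Filter intervalIntegral

noncomputable def gg (x : ℝ) : ℝ := Real.exp (-x ^ 2)
noncomputable def cc : ℝ := 2 / Real.sqrt Real.pi
noncomputable def EE (x : ℝ) : ℂ :=
  Complex.exp (Real.pi * Complex.I * ((erfFun x : ℂ) + 1))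

lemma psiFun_eq : psiFun = fun x => 1 - EE x := rfl

lemma gg_cont : Continuous gg := by
  unfold gg; fun_prop

lemma gg_pos (x : ℝ) : 0 < gg x := Real.exp_pos _
lemma gg_le_one (x : ℝ) : gg x ≤ 1 :=
  Real.exp_le_one_iff.2 (by nlinarith [sq_nonneg x])

lemma hasDerivAt_gg (x : ℝ) : HasDerivAt gg (-2 * x * gg x) x := by
  have h : HasDerivAt (fun x : ℝ => -x ^ 2) (-(2 * x)) x := by
    simpa using ((hasDerivAt_pow 2 x).fun_neg)
  have := h.exp
  show HasDerivAt (fun x : ℝ => Real.exp (-x ^ 2)) (-2 * x * gg x) x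
  simpa [gg, mul_comm, mul_assoc, mul_left_comm] using this

lemma hasDerivAt_erfFun (x : ℝ) : HasDerivAt erfFun (cc * gg x) x := by
  have h : HasDerivAt (fun u => ∫ s in (0:ℝ)..u, Real.exp (-s ^ 2)) (gg x) x := by
    refine intervalIntegral.integral_hasDerivAt_right
      (gg_cont.intervalIntegrable _ _) ?_ gg_cont.continuousAt
    exact gg_cont.aestronglyMeasurable.stronglyMeasurableAtFilter
  show HasDerivAt (fun y => 2 / Real.sqrt Real.pi * ∫ s in (0:ℝ)..y, Real.exp (-s ^ 2)) (cc * gg x) x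
  simpa [erfFun, cc] using h.const_mul (2 / Real.sqrt Real.pi)

lemma norm_EE (x : ℝ) : ‖EE x‖ = 1 := by
  rw [EE, Complex.norm_exp]
  norm_num [Complex.mul_re, Complex.mul_im]

lemma hasDerivAt_EE (x : ℝ) :
    HasDerivAt EE ((Real.pi * Complex.I * cc * gg x) * EE x) x := by
  have h1 : HasDerivAt (fun x : ℝ => (Real.pi : ℂ) * Complex.I * ((erfFun x : ℂ) + 1))
      ((Real.pi : ℂ) * Complex.I * ((cc * gg x : ℝ) : ℂ)) x :=
    (((hasDerivAt_erfFun x).ofReal_comp).add_const 1).const_mul _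
  have := h1.cexp
  rw [show (fun x : ℝ => Complex.exp ((Real.pi : ℂ) * Complex.I * ((erfFun x : ℂ) + 1))) = EE
    from rfl] at this
  have heq : Complex.exp ((Real.pi : ℂ) * Complex.I * ((erfFun x : ℂ) + 1)) *
      ((Real.pi : ℂ) * Complex.I * ((cc * gg x : ℝ) : ℂ))
      = (Real.pi * Complex.I * cc * gg x) * EE x := by
    rw [EE]; push_cast; ring
  exact heq ▸ this

lemma hasDerivAt_psiFun (x : ℝ) :
    HasDerivAt psiFun (-(Real.pi * Complex.I * cc * gg x * EE x)) x := by
  rw [psiFun_eq]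
  simpa using (hasDerivAt_const x (1:ℂ)).fun_sub (hasDerivAt_EE x)

lemma gauss_decay (k : ℕ) (x : ℝ) :
    |x| ^ k * gg x ≤ (k.factorial : ℝ) * Real.exp 4⁻¹ := by
  have h1 : |x| ^ k ≤ (k.factorial : ℝ) * Real.exp |x| := by
    have := Real.pow_div_factorial_le_exp |x| (abs_nonneg x) k
    have hk : (0:ℝ) < k.factorial := by positivity
    rw [div_le_iff₀ hk] at this
    linarith [this]
  have h2 : Real.exp |x| * gg x ≤ Real.exp 4⁻¹ := by
    rw [gg, ← Real.exp_add]
    apply Real.exp_le_exp.2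
    nlinarith [sq_nonneg (|x| - 2⁻¹), sq_abs x]
  calc |x| ^ k * gg x ≤ ((k.factorial : ℝ) * Real.exp |x|) * gg x := by
        exact mul_le_mul_of_nonneg_right h1 (gg_pos x).le
    _ = (k.factorial : ℝ) * (Real.exp |x| * gg x) := by ring
    _ ≤ (k.factorial : ℝ) * Real.exp 4⁻¹ := by
        exact mul_le_mul_of_nonneg_left h2 (by positivity)

inductive PsiRep : (ℝ → ℂ) → Prop
  | mono (a : ℂ) (m n : ℕ) :
      PsiRep (fun x => a * ((x ^ m * gg x ^ (n + 1) : ℝ) : ℂ) * EE x)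
  | add {f h : ℝ → ℂ} : PsiRep f → PsiRep h → PsiRep (fun x => f x + h x)

lemma PsiRep.hasDeriv {f : ℝ → ℂ} (hf : PsiRep f) :
    ∃ f' : ℝ → ℂ, PsiRep f' ∧ ∀ x, HasDerivAt f (f' x) x := by
  induction hf with
  | mono a m n =>
      refine ⟨fun x => (a * m) * ((x ^ (m - 1) * gg x ^ (n + 1) : ℝ) : ℂ) * EE x
        + ((-2 * (n + 1) * a) * ((x ^ (m + 1) * gg x ^ (n + 1) : ℝ) : ℂ) * EE x
          + (a * (Real.pi * Complex.I * cc)) * ((x ^ m * gg x ^ (n + 1 + 1) : ℝ) : ℂ) * EE x),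
        PsiRep.add (PsiRep.mono (a * m) (m - 1) n) (PsiRep.add
          (PsiRep.mono (-2 * (n + 1) * a) (m + 1) n)
          (PsiRep.mono (a * (Real.pi * Complex.I * cc)) m (n + 1))), fun x => ?_⟩
      have hP : HasDerivAt (fun x : ℝ => x ^ m * gg x ^ (n + 1))
          ((m : ℝ) * x ^ (m - 1) * gg x ^ (n + 1)
            + x ^ m * (((n + 1 : ℕ) : ℝ) * gg x ^ n * (-2 * x * gg x))) x :=
        (hasDerivAt_pow m x).mul ((hasDerivAt_gg x).pow (n + 1))
      have h := (hP.ofReal_comp.const_mul a).mul (hasDerivAt_EE x)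
      have heq : a * ((((m : ℝ) * x ^ (m - 1) * gg x ^ (n + 1)
            + x ^ m * (((n + 1 : ℕ) : ℝ) * gg x ^ n * (-2 * x * gg x))) : ℝ) : ℂ) * EE x
          + a * ((x ^ m * gg x ^ (n + 1) : ℝ) : ℂ)
            * ((Real.pi * Complex.I * cc * gg x) * EE x)
          = (a * m) * ((x ^ (m - 1) * gg x ^ (n + 1) : ℝ) : ℂ) * EE x
            + ((-2 * (n + 1) * a) * ((x ^ (m + 1) * gg x ^ (n + 1) : ℝ) : ℂ) * EE x
              + (a * (Real.pi * Complex.I * cc)) * ((x ^ m * gg x ^ (n + 1 + 1) : ℝ) : ℂ) * EE x) := by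
        push_cast
        ring
      rw [heq] at h
      exact h
  | add hf hh ihf ihh =>
      obtain ⟨f', hf', hdf⟩ := ihf
      obtain ⟨h', hh', hdh⟩ := ihh
      exact ⟨fun x => f' x + h' x, PsiRep.add hf' hh', fun x => (hdf x).add (hdh x)⟩

lemma PsiRep.bound {f : ℝ → ℂ} (hf : PsiRep f) (k : ℕ) :
    ∃ C : ℝ, ∀ x, |x| ^ k * ‖f x‖ ≤ C := by
  induction hf with
  | mono a m n =>
      refine ⟨‖a‖ * (((k + m).factorial : ℝ) * Real.exp 4⁻¹), fun x => ?_⟩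
      have hnorm : ‖a * ((x ^ m * gg x ^ (n + 1) : ℝ) : ℂ) * EE x‖
          = ‖a‖ * (|x| ^ m * gg x ^ (n + 1)) := by
        rw [norm_mul, norm_mul, norm_EE, Complex.norm_real, mul_one, Real.norm_eq_abs,
          abs_mul, abs_pow, abs_pow, abs_of_pos (gg_pos x)]
      rw [hnorm]
      have hgpow : gg x ^ (n + 1) ≤ gg x := by
        simpa using pow_le_pow_of_le_one (gg_pos x).le (gg_le_one x) (Nat.one_le_iff_ne_zero.2
          (Nat.succ_ne_zero n))
      have h1 : |x| ^ k * (|x| ^ m * gg x ^ (n + 1)) ≤ |x| ^ (k + m) * gg x := by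
        rw [← mul_assoc, ← pow_add]
        exact mul_le_mul_of_nonneg_left hgpow (by positivity)
      calc |x| ^ k * (‖a‖ * (|x| ^ m * gg x ^ (n + 1)))
          = ‖a‖ * (|x| ^ k * (|x| ^ m * gg x ^ (n + 1))) := by ring
        _ ≤ ‖a‖ * (|x| ^ (k + m) * gg x) := mul_le_mul_of_nonneg_left h1 (norm_nonneg a)
        _ ≤ ‖a‖ * (((k + m).factorial : ℝ) * Real.exp 4⁻¹) :=
            mul_le_mul_of_nonneg_left (gauss_decay (k + m) x) (norm_nonneg a)
  | add hf hh ihf ihh =>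
      obtain ⟨C1, h1⟩ := ihf
      obtain ⟨C2, h2⟩ := ihh
      refine ⟨C1 + C2, fun x => ?_⟩
      calc |x| ^ k * ‖_ + _‖ ≤ |x| ^ k * (‖_‖ + ‖_‖) :=
            mul_le_mul_of_nonneg_left (norm_add_le _ _) (by positivity)
        _ = |x| ^ k * ‖_‖ + |x| ^ k * ‖_‖ := by ring
        _ ≤ C1 + C2 := add_le_add (h1 x) (h2 x)

lemma rep_iteratedDeriv : ∀ j : ℕ, PsiRep (iteratedDeriv (j + 1) psiFun) := by
  intro j
  induction j with
  | zero =>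
      have : iteratedDeriv 1 psiFun
          = fun x => (-(Real.pi * Complex.I * cc)) * ((x ^ 0 * gg x ^ (0 + 1) : ℝ) : ℂ) * EE x := by
        funext x
        rw [iteratedDeriv_one, (hasDerivAt_psiFun x).deriv]
        push_cast
        ring
      rw [this]
      exact PsiRep.mono _ _ _
  | succ j ih =>
      obtain ⟨f', hf', hd⟩ := ih.hasDeriv
      have : iteratedDeriv (j + 1 + 1) psiFun = f' := by
        rw [iteratedDeriv_succ]
        funext x
        exact (hd x).deriv
      rw [this]
      exact hf'

lemma gg_integrable : Integrable gg := by
  have := integrable_exp_neg_mul_sq (one_pos)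
  show Integrable (fun x : ℝ => Real.exp (-x ^ 2))
  simpa [gg, neg_mul, one_mul] using this

lemma mul_gg_integrable : Integrable (fun s : ℝ => s * gg s) := by
  have := integrable_mul_exp_neg_mul_sq (one_pos)
  simpa [gg, neg_mul, one_mul] using this

lemma cc_sqrtpi : cc * (Real.sqrt Real.pi / 2) = 1 := by
  have h : Real.sqrt Real.pi ≠ 0 := by
    positivity
  unfold cc
  field_simp [cc]

lemma tail_eq {x : ℝ} (hx : 0 ≤ x) :
    cc * ∫ s in Ioi x, gg s = 1 - erfFun x := by
  have hsplit : ∫ s in Ioi (0:ℝ), gg s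
      = (∫ s in Ioc 0 x, gg s) + ∫ s in Ioi x, gg s := by
    rw [← Ioc_union_Ioi_eq_Ioi hx]
    exact setIntegral_union (Ioc_disjoint_Ioi le_rfl) measurableSet_Ioi
      gg_integrable.integrableOn gg_integrable.integrableOn
  have h0 : ∫ s in Ioi (0:ℝ), gg s = Real.sqrt Real.pi / 2 := by
    have := integral_gaussian_Ioi 1
    simpa [gg, neg_mul, one_mul] using this
  have herf : erfFun x = cc * ∫ s in Ioc 0 x, gg s := by
    rw [erfFun, cc, ← intervalIntegral.integral_of_le hx]
    rfl
  have := cc_sqrtpi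
  rw [herf]
  rw [h0] at hsplit
  linear_combination this - cc * hsplit

lemma gg_tendsto_zero : Tendsto gg atTop (nhds 0) := by
  have h1 : Tendsto (fun x : ℝ => x ^ 2) atTop atTop := tendsto_pow_atTop two_ne_zero
  have h2 := Real.tendsto_exp_neg_atTop_nhds_zero.comp h1
  show Tendsto (fun x : ℝ => Real.exp (-x ^ 2)) atTop (nhds 0)
  simpa [gg, Function.comp_def] using h2

lemma tail_le {x : ℝ} (hx : 1 ≤ x) :
    ∫ s in Ioi x, gg s ≤ gg x / 2 := by
  have hval : ∫ s in Ioi x, s * gg s = gg x / 2 := by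
    have hF : ∀ s ∈ Ici x, HasDerivAt (fun u : ℝ => -(gg u) / 2) (s * gg s) s := by
      intro s _
      have this : HasDerivAt (fun u : ℝ => -(gg u) / 2) (-(-2 * s * gg s) / 2) s :=
        ((hasDerivAt_gg s).fun_neg).div_const 2
      convert this using 1
      ring
    have hInt : IntegrableOn (fun s : ℝ => s * gg s) (Ioi x) := mul_gg_integrable.integrableOn
    have hT : Tendsto (fun u : ℝ => -(gg u) / 2) atTop (nhds 0) := by
      have := (gg_tendsto_zero.neg).div_const 2
      simpa using this
    have := integral_Ioi_of_hasDerivAt_of_tendsto' hF hInt hT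
    rw [this]; ring
  have hmono : ∫ s in Ioi x, gg s ≤ ∫ s in Ioi x, s * gg s := by
    refine setIntegral_mono_on gg_integrable.integrableOn mul_gg_integrable.integrableOn
      measurableSet_Ioi ?_
    intro s hs
    have h1s : 1 ≤ s := hx.trans (le_of_lt hs)
    nlinarith [gg_pos s]
  linarith [hmono, hval.le, hval.ge]

lemma tail_nonneg (x : ℝ) : 0 ≤ ∫ s in Ioi x, gg s :=
  setIntegral_nonneg measurableSet_Ioi fun s _ => (gg_pos s).le

lemma erfFun_neg (x : ℝ) : erfFun (-x) = -erfFun x := by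
  have h : (∫ s in (0:ℝ)..x, gg s) = ∫ s in (-x)..(0:ℝ), gg s := by
    have := intervalIntegral.integral_comp_neg gg (a := 0) (b := x)
    simpa [gg, neg_sq] using this
  have h2 : (∫ s in (0:ℝ)..(-x), gg s) = -∫ s in (-x)..(0:ℝ), gg s :=
    intervalIntegral.integral_symm _ _
  rw [erfFun, erfFun]
  show cc * ∫ s in (0:ℝ)..(-x), gg s = -(cc * ∫ s in (0:ℝ)..x, gg s)
  rw [h2, h]
  ring

lemma sqrtpi_le_two : Real.sqrt Real.pi ≤ 2 := by
  nlinarith [Real.sq_sqrt Real.pi_pos.le, Real.sqrt_nonneg Real.pi, Real.pi_le_four]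

lemma one_le_sqrtpi : 1 ≤ Real.sqrt Real.pi := by
  nlinarith [Real.sq_sqrt Real.pi_pos.le, Real.sqrt_nonneg Real.pi, Real.pi_gt_three]

lemma key_r {x : ℝ} (hx : 1 ≤ x) :
    0 ≤ 1 - erfFun x ∧ Real.pi * (1 - erfFun x) ≤ Real.sqrt Real.pi * gg x := by
  have hx0 : (0:ℝ) ≤ x := by linarith
  have he := tail_eq hx0
  have hle := tail_le hx
  have hnn := tail_nonneg x
  have hcc : 0 < cc := by
    rw [cc]; positivity
  constructor
  · rw [← he]; positivity
  · have hpi : Real.sqrt Real.pi * Real.sqrt Real.pi = Real.pi :=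
      Real.mul_self_sqrt Real.pi_pos.le
    have h1 : 1 - erfFun x ≤ cc * (gg x / 2) := by
      rw [← he]
      exact mul_le_mul_of_nonneg_left hle hcc.le
    have h2 : cc * (gg x / 2) = gg x / Real.sqrt Real.pi := by
      rw [cc]; ring
    rw [h2] at h1
    have hs : 0 < Real.sqrt Real.pi := by linarith [one_le_sqrtpi]
    rw [le_div_iff₀ hs] at h1
    nlinarith [mul_le_mul_of_nonneg_left h1 hs.le, hpi]

lemma gg_neg (x : ℝ) : gg (-x) = gg x := by simp [gg]

lemma norm_one_sub_exp_mul_I {t : ℝ} (h : |t| ≤ 1) :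
    ‖1 - Complex.exp ((t : ℂ) * Complex.I)‖ ≤ 2 * |t| := by
  rw [norm_sub_rev]
  have h1 : ‖((t : ℂ) * Complex.I)‖ ≤ 1 := by
    simpa [Complex.norm_real] using h
  have := Complex.norm_exp_sub_one_le h1
  simpa [Complex.norm_real] using this

lemma sqrtpi_gg_le_one {x : ℝ} (hx : 1 ≤ |x|) : Real.sqrt Real.pi * gg x ≤ 1 := by
  have h2 : gg x ≤ Real.exp (-1) := by
    apply Real.exp_le_exp.2
    nlinarith [sq_abs x]
  have he : (2 : ℝ) < Real.exp 1 := by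
    have := Real.exp_one_gt_d9
    norm_num at this ⊢
    linarith
  have hml : Real.exp (-1) * Real.exp 1 = 1 := by rw [← Real.exp_add]; norm_num
  have : Real.sqrt Real.pi * gg x ≤ 2 * Real.exp (-1) :=
    mul_le_mul sqrtpi_le_two h2 (gg_pos x).le (by norm_num)
  nlinarith [Real.exp_pos (-1)]

lemma psi_decay {x : ℝ} (hx : 1 ≤ |x|) : ‖psiFun x‖ ≤ 4 * gg x := by
  rcases le_abs.mp hx with hx1 | hx1
  · -- 1 ≤ x
    set r := 1 - erfFun x with hr
    obtain ⟨hr0, hrpi⟩ := key_r hx1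
    rw [← hr] at hrpi hr0
    have hle1 : Real.pi * r ≤ 1 := le_trans hrpi (sqrtpi_gg_le_one hx)
    have hrpos : 0 ≤ Real.pi * r := mul_nonneg Real.pi_pos.le hr0
    have hexp : (Real.pi : ℂ) * Complex.I * ((erfFun x : ℂ) + 1)
        = 2 * (Real.pi : ℂ) * Complex.I + ((-(Real.pi * r) : ℝ) : ℂ) * Complex.I := by
      rw [show (erfFun x : ℝ) = 1 - r from by rw [hr]; ring]
      push_cast
      ring
    have hpsi : psiFun x = 1 - Complex.exp (((-(Real.pi * r) : ℝ) : ℂ) * Complex.I) := by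
      rw [psiFun, hexp, Complex.exp_add, Complex.exp_two_pi_mul_I, one_mul]
    rw [hpsi]
    have habs : |(-(Real.pi * r))| = Real.pi * r := by
      rw [abs_neg, abs_of_nonneg hrpos]
    have := norm_one_sub_exp_mul_I (t := -(Real.pi * r)) (by rw [habs]; exact hle1)
    rw [habs] at this
    calc ‖1 - Complex.exp (((-(Real.pi * r) : ℝ) : ℂ) * Complex.I)‖ ≤ 2 * (Real.pi * r) := this
      _ ≤ 2 * (Real.sqrt Real.pi * gg x) := by linarith
      _ ≤ 4 * gg x := by nlinarith [gg_pos x, sqrtpi_le_two]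
  · -- 1 ≤ -x
    set r := 1 - erfFun (-x) with hr
    obtain ⟨hr0, hrpi⟩ := key_r hx1
    rw [gg_neg] at hrpi
    rw [← hr] at hrpi hr0
    have hle1 : Real.pi * r ≤ 1 := le_trans hrpi (sqrtpi_gg_le_one hx)
    have hrpos : 0 ≤ Real.pi * r := mul_nonneg Real.pi_pos.le hr0
    have herfx : erfFun x = r - 1 := by
      have := erfFun_neg x
      rw [hr]
      linarith [this]
    have hexp : (Real.pi : ℂ) * Complex.I * ((erfFun x : ℂ) + 1)
        = ((Real.pi * r : ℝ) : ℂ) * Complex.I := by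
      rw [herfx]
      push_cast
      ring
    have hpsi : psiFun x = 1 - Complex.exp (((Real.pi * r : ℝ) : ℂ) * Complex.I) := by
      rw [psiFun, hexp]
    rw [hpsi]
    have habs : |Real.pi * r| = Real.pi * r := abs_of_nonneg hrpos
    have := norm_one_sub_exp_mul_I (t := Real.pi * r) (by rw [habs]; exact hle1)
    rw [habs] at this
    calc ‖1 - Complex.exp (((Real.pi * r : ℝ) : ℂ) * Complex.I)‖ ≤ 2 * (Real.pi * r) := this
      _ ≤ 2 * (Real.sqrt Real.pi * gg x) := by linarith
      _ ≤ 4 * gg x := by nlinarith [gg_pos x, sqrtpi_le_two]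

lemma psi_bound0 (k : ℕ) : ∃ C : ℝ, ∀ x : ℝ, |x| ^ k * ‖psiFun x‖ ≤ C := by
  refine ⟨2 + 4 * ((k.factorial : ℝ) * Real.exp 4⁻¹), fun x => ?_⟩
  have hfe : (0:ℝ) ≤ 4 * ((k.factorial : ℝ) * Real.exp 4⁻¹) := by positivity
  rcases le_or_gt (|x|) 1 with hx | hx
  · have h1 : ‖psiFun x‖ ≤ 2 := by
      rw [psiFun_eq]
      calc ‖1 - EE x‖ ≤ ‖(1 : ℂ)‖ + ‖EE x‖ := norm_sub_le _ _
        _ = 2 := by rw [norm_EE, norm_one]; norm_num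
    have h2 : |x| ^ k ≤ 1 := pow_le_one₀ (abs_nonneg x) hx
    have h3 := mul_le_mul h2 h1 (norm_nonneg _) zero_le_one
    linarith
  · have h1 := psi_decay hx.le
    have h2 : |x| ^ k * ‖psiFun x‖ ≤ |x| ^ k * (4 * gg x) :=
      mul_le_mul_of_nonneg_left h1 (by positivity)
    have h3 : |x| ^ k * (4 * gg x) = 4 * (|x| ^ k * gg x) := by ring
    have h4 := gauss_decay k x
    nlinarith

/-- `ψ` is a Schwartz function: `x^k ψ^{(j)}(x)` is bounded for all `j, k`. -/
theorem psi_schwartz :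
    ∀ j k : ℕ, ∃ C : ℝ, ∀ x : ℝ, |x| ^ k * ‖iteratedDeriv j psiFun x‖ ≤ C := by
  intro j k
  cases j with
  | zero => simpa [iteratedDeriv_zero] using psi_bound0 k
  | succ j => exact (rep_iteratedDeriv j).bound k
end

section
/- Let A be a complex unital Banach algebra with a continuous trace τ : A → ℂ (a continuous linear map with τ(xy) = τ(yx)). Let a : ℝ → A be a continuously differentiable path and set u(t) = exp(2πi a(t)). Then τ(u'(t) u(t)^{−1}) = 2πi τ(a'(t)) for all t. -/
open NormedSpace
open scoped Nat

lemma hasDerivAt_pow_comp {A : Type*} [NormedRing A] [NormedAlgebra ℝ A]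
    {b : ℝ → A} {b' : A} {t : ℝ} (hb : HasDerivAt b b' t) (n : ℕ) :
    HasDerivAt (fun r => b r ^ n)
      (∑ k ∈ Finset.range n, b t ^ k * b' * b t ^ (n - 1 - k)) t := by
  induction n with
  | zero => simpa using hasDerivAt_const t (1 : A)
  | succ n ih =>
    have h := ih.mul hb
    have : (∑ k ∈ Finset.range n, b t ^ k * b' * b t ^ (n - 1 - k)) * b t + b t ^ n * b'
        = ∑ k ∈ Finset.range (n + 1), b t ^ k * b' * b t ^ (n + 1 - 1 - k) := by
      rw [Finset.sum_range_succ, Finset.sum_mul]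
      congr 1
      · refine Finset.sum_congr rfl fun k hk => ?_
        rw [Finset.mem_range] at hk
        rw [mul_assoc, mul_assoc, ← pow_succ]
        have hk' : n - 1 - k + 1 = n + 1 - 1 - k := by omega
        rw [hk', mul_assoc]
      · simp
    rw [this] at h
    simpa [pow_succ, Pi.mul_def] using h

lemma trace_key {A : Type*} [NormedRing A] [NormedAlgebra ℂ A]
    [CompleteSpace A] (τ : A →L[ℂ] ℂ) (hτ : ∀ x y : A, τ (x * y) = τ (y * x))
    (b b' : ℝ → A) (hb : ∀ r, HasDerivAt b (b' r) r) (hbc : Continuous b') (t : ℝ) :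
    τ (deriv (fun r => exp (b r)) t * exp (-(b t))) = τ (b' t) := by
  have hbcont : Continuous b :=
    continuous_iff_continuousAt.2 fun r => (hb r).continuousAt
  obtain ⟨C₀, hC₀⟩ := (isCompact_Icc (a := t - 1) (b := t + 1)).exists_bound_of_continuousOn
    hbcont.continuousOn
  obtain ⟨C₁, hC₁⟩ := (isCompact_Icc (a := t - 1) (b := t + 1)).exists_bound_of_continuousOn
    hbc.continuousOn
  set C : ℝ := max C₀ 1 with hCdef
  set C' : ℝ := max C₁ 0 with hC'def
  set N : ℝ := max ‖(1 : A)‖ 1 with hNdef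
  have hC1 : (1 : ℝ) ≤ C := le_max_right _ _
  have hC0 : (0 : ℝ) ≤ C := le_trans zero_le_one hC1
  have hC'0 : (0 : ℝ) ≤ C' := le_max_right _ _
  have hN1 : (1 : ℝ) ≤ N := le_max_right _ _
  have hN0 : (0 : ℝ) ≤ N := le_trans zero_le_one hN1
  have hCb : ∀ r ∈ Set.Icc (t - 1) (t + 1), ‖b r‖ ≤ C :=
    fun r hr => le_trans (hC₀ r hr) (le_max_left _ _)
  have hCb' : ∀ r ∈ Set.Icc (t - 1) (t + 1), ‖b' r‖ ≤ C' :=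
    fun r hr => le_trans (hC₁ r hr) (le_max_left _ _)
  set g : ℕ → ℝ → A := fun n r => ((n ! : ℂ))⁻¹ • b r ^ n with hgdef
  set g' : ℕ → ℝ → A :=
    fun n r => ((n ! : ℂ))⁻¹ • ∑ k ∈ Finset.range n, b r ^ k * b' r * b r ^ (n - 1 - k)
    with hg'def
  set u : ℕ → ℝ := fun n => N ^ 2 * C' * ((2 * C) ^ n / n !) with hudef
  have hu : Summable u := (Real.summable_pow_div_factorial (2 * C)).mul_left (N ^ 2 * C')
  have htmem : t ∈ Set.Ioo (t - 1) (t + 1) := by constructor <;> linarith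
  have hg : ∀ n r, r ∈ Set.Ioo (t - 1) (t + 1) → HasDerivAt (g n) (g' n r) r :=
    fun n r _ => by exact (hasDerivAt_pow_comp (hb r) n).const_smul ((n ! : ℂ))⁻¹
  have hg' : ∀ n r, r ∈ Set.Ioo (t - 1) (t + 1) → ‖g' n r‖ ≤ u n := by
    intro n r hr
    have hrI : r ∈ Set.Icc (t - 1) (t + 1) := Set.Ioo_subset_Icc_self hr
    have hbr := hCb r hrI
    have hbr' := hCb' r hrI
    have hp : ∀ m : ℕ, ‖b r ^ m‖ ≤ N * C ^ m := by
      intro m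
      induction m with
      | zero =>
        simp only [pow_zero, mul_one]
        exact le_max_left _ _
      | succ m ih =>
        calc ‖b r ^ (m + 1)‖ = ‖b r ^ m * b r‖ := by rw [pow_succ]
          _ ≤ ‖b r ^ m‖ * ‖b r‖ := norm_mul_le _ _
          _ ≤ N * C ^ m * C :=
            mul_le_mul ih hbr (norm_nonneg _) (mul_nonneg hN0 (pow_nonneg hC0 _))
          _ = N * C ^ (m + 1) := by rw [pow_succ]; ring
    have hNC : (0 : ℝ) ≤ N ^ 2 * C' := mul_nonneg (pow_nonneg hN0 2) hC'0
    have hterm : ∀ k ∈ Finset.range n,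
        ‖b r ^ k * b' r * b r ^ (n - 1 - k)‖ ≤ N ^ 2 * C' * C ^ n := by
      intro k hk
      rw [Finset.mem_range] at hk
      calc ‖b r ^ k * b' r * b r ^ (n - 1 - k)‖
          ≤ ‖b r ^ k * b' r‖ * ‖b r ^ (n - 1 - k)‖ := norm_mul_le _ _
        _ ≤ ‖b r ^ k‖ * ‖b' r‖ * ‖b r ^ (n - 1 - k)‖ :=
            mul_le_mul_of_nonneg_right (norm_mul_le _ _) (norm_nonneg _)
        _ ≤ N * C ^ k * C' * (N * C ^ (n - 1 - k)) := by
            refine mul_le_mul (mul_le_mul (hp k) hbr' (norm_nonneg _)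
              (mul_nonneg hN0 (pow_nonneg hC0 _))) (hp _) (norm_nonneg _) ?_
            exact mul_nonneg (mul_nonneg hN0 (pow_nonneg hC0 _)) hC'0
        _ = N ^ 2 * C' * C ^ (k + (n - 1 - k)) := by rw [pow_add]; ring
        _ = N ^ 2 * C' * C ^ (n - 1) := by
            congr 2
            omega
        _ ≤ N ^ 2 * C' * C ^ n := by
            refine mul_le_mul_of_nonneg_left ?_ hNC
            exact pow_le_pow_right₀ hC1 (by omega)
    have hfac : (0 : ℝ) < n ! := by positivity
    have hn2 : (n : ℝ) ≤ 2 ^ n := by exact_mod_cast (Nat.lt_two_pow_self (n := n)).le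
    calc ‖g' n r‖
        ≤ ‖((n ! : ℂ))⁻¹‖ * ‖∑ k ∈ Finset.range n, b r ^ k * b' r * b r ^ (n - 1 - k)‖ :=
          _root_.norm_smul_le _ _
      _ ≤ ((n ! : ℝ))⁻¹ * (n * (N ^ 2 * C' * C ^ n)) := by
          have h1 : ‖((n ! : ℂ))⁻¹‖ = ((n ! : ℝ))⁻¹ := by
            rw [norm_inv, Complex.norm_natCast]
          rw [h1]
          refine mul_le_mul_of_nonneg_left ?_ (by positivity)
          calc ‖∑ k ∈ Finset.range n, b r ^ k * b' r * b r ^ (n - 1 - k)‖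
              ≤ ∑ k ∈ Finset.range n, ‖b r ^ k * b' r * b r ^ (n - 1 - k)‖ :=
                norm_sum_le _ _
            _ ≤ ∑ _k ∈ Finset.range n, N ^ 2 * C' * C ^ n := Finset.sum_le_sum hterm
            _ = n * (N ^ 2 * C' * C ^ n) := by simp [mul_comm]
      _ ≤ u n := by
          show ((n ! : ℝ))⁻¹ * (n * (N ^ 2 * C' * C ^ n)) ≤ N ^ 2 * C' * ((2 * C) ^ n / n !)
          have hx : (0 : ℝ) ≤ N ^ 2 * C' * C ^ n * ((n ! : ℝ))⁻¹ :=
            mul_nonneg (mul_nonneg hNC (pow_nonneg hC0 n)) (inv_nonneg.2 hfac.le)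
          calc ((n ! : ℝ))⁻¹ * (n * (N ^ 2 * C' * C ^ n))
              = (n : ℝ) * (N ^ 2 * C' * C ^ n * ((n ! : ℝ))⁻¹) := by ring
            _ ≤ 2 ^ n * (N ^ 2 * C' * C ^ n * ((n ! : ℝ))⁻¹) :=
                mul_le_mul_of_nonneg_right hn2 hx
            _ = N ^ 2 * C' * (2 ^ n * C ^ n / (n ! : ℝ)) := by ring
            _ = N ^ 2 * C' * ((2 * C) ^ n / (n ! : ℝ)) := by rw [mul_pow]
  have hg0 : Summable fun n => g n t := expSeries_summable' (𝕂 := ℂ) (b t)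
  have hder : HasDerivAt (fun r => exp (b r)) (∑' n, g' n t) t := by
    have h := hasDerivAt_tsum_of_isPreconnected hu isOpen_Ioo isPreconnected_Ioo
      hg hg' htmem hg0 htmem
    have heq : (fun r => exp (b r)) = fun r => ∑' n, g n r := by
      funext r
      rw [exp_eq_tsum ℂ]
    rw [heq]
    exact h
  rw [hder.deriv]
  set e : A := exp (-(b t)) with hedef
  have hsum' : Summable (fun n => g' n t) :=
    Summable.of_norm_bounded hu (fun n => hg' n t htmem)
  set L : A →L[ℂ] ℂ := τ.comp ((ContinuousLinearMap.mul ℂ A).flip e) with hLdef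
  have hLapp : ∀ x : A, L x = τ (x * e) := fun x => rfl
  have step1 : τ ((∑' n, g' n t) * e) = ∑' n, τ (g' n t * e) := by
    have h2 := (hsum'.hasSum.mapL L).tsum_eq
    simp only [hLapp] at h2
    exact h2.symm
  rw [step1]
  have hcommk : ∀ k : ℕ, e * b t ^ k = b t ^ k * e := by
    intro k
    exact ((((Commute.refl (b t)).neg_right).exp_right).pow_left k).symm.eq
  have hterm2 : ∀ n : ℕ, τ (g' n t * e)
      = ((n ! : ℂ))⁻¹ * (n * τ (b' t * b t ^ (n - 1) * e)) := by
    intro n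
    rw [hg'def]
    simp only []
    rw [smul_mul_assoc, map_smul, smul_eq_mul]
    congr 1
    rw [Finset.sum_mul, map_sum]
    have hk : ∀ k ∈ Finset.range n,
        τ (b t ^ k * b' t * b t ^ (n - 1 - k) * e) = τ (b' t * b t ^ (n - 1) * e) := by
      intro k hkm
      rw [Finset.mem_range] at hkm
      have h1 : b t ^ k * b' t * b t ^ (n - 1 - k) * e
          = b t ^ k * (b' t * b t ^ (n - 1 - k) * e) := by
        rw [mul_assoc, mul_assoc, mul_assoc]
      have hnk : n - 1 - k + k = n - 1 := by omega
      rw [h1, hτ, mul_assoc (b' t * b t ^ (n - 1 - k)) e (b t ^ k), hcommk k,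
        mul_assoc (b' t) (b t ^ (n - 1 - k)), ← mul_assoc (b t ^ (n - 1 - k)) (b t ^ k) e,
        ← pow_add, hnk, ← mul_assoc]
    rw [Finset.sum_congr rfl hk, Finset.sum_const, Finset.card_range, nsmul_eq_mul]
  simp only [hterm2]
  set h : ℕ → ℂ := fun n => ((n ! : ℂ))⁻¹ * (n * τ (b' t * b t ^ (n - 1) * e)) with hhdef
  set L2 : A →L[ℂ] ℂ :=
    τ.comp (((ContinuousLinearMap.mul ℂ A).flip e).comp (ContinuousLinearMap.mul ℂ A (b' t)))
    with hL2def
  have hL2app : ∀ x : A, L2 x = τ (b' t * x * e) := fun x => rfl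
  have hexpinv : exp (b t) * e = 1 := by
    rw [hedef, ← exp_add_of_commute_of_mem_ball (𝕂 := ℂ) ((Commute.refl (b t)).neg_right)
      (by rw [expSeries_radius_eq_top]; exact edist_lt_top _ _)
      (by rw [expSeries_radius_eq_top]; exact edist_lt_top _ _), add_neg_cancel, exp_zero]
  have hmain : HasSum (fun n : ℕ => ((n ! : ℂ))⁻¹ * τ (b' t * b t ^ n * e)) (τ (b' t)) := by
    have h3 := (exp_series_hasSum_exp' (𝕂 := ℂ) (b t)).mapL L2
    simp only [hL2app, mul_smul_comm, smul_mul_assoc, map_smul, smul_eq_mul] at h3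
    rwa [mul_assoc, hexpinv, mul_one] at h3
  have hshift : (fun n : ℕ => h (n + 1)) = fun n : ℕ => ((n ! : ℂ))⁻¹ * τ (b' t * b t ^ n * e) := by
    funext n
    rw [hhdef]
    simp only [Nat.add_sub_cancel]
    have hfac : ((n ! : ℂ)) ≠ 0 := by exact_mod_cast Nat.factorial_ne_zero n
    have hsucc : ((n : ℂ)) + 1 ≠ 0 := by exact_mod_cast Nat.succ_ne_zero n
    rw [Nat.factorial_succ]
    push_cast
    field_simp
  have hfin : HasSum h (τ (b' t)) := by
    have h4 : HasSum (fun n : ℕ => h (n + 1)) (τ (b' t)) := by rw [hshift]; exact hmain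
    have h5 := (hasSum_nat_add_iff (f := h) 1).1 h4
    have h6 : h 0 = 0 := by simp [hhdef]
    simpa [h6] using h5
  exact hfin.tsum_eq


/-- for a continuous trace `τ` on a complex unital Banach algebra and a
continuously differentiable path `a`, with `u(t) = exp(2πi a(t))` one has
`τ(u'(t) u(t)⁻¹) = 2πi τ(a'(t))` (the inverse of `u(t)` being `exp(−2πi a(t))`). -/
theorem trace_log_deriv_exp {A : Type*} [NormedRing A] [NormedAlgebra ℂ A]
    [CompleteSpace A] (τ : A →L[ℂ] ℂ) (hτ : ∀ x y : A, τ (x * y) = τ (y * x))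
    (a a' : ℝ → A) (hd : ∀ t, HasDerivAt a (a' t) t) (hc : Continuous a') (t : ℝ) :
    τ (deriv (fun r => exp (((2 * Real.pi : ℝ) * Complex.I) • a r)) t *
        exp (-(((2 * Real.pi : ℝ) * Complex.I) • a t))) =
      2 * Real.pi * Complex.I * τ (a' t) := by
  have key := trace_key τ hτ (fun r => (((2 * Real.pi : ℝ) : ℂ) * Complex.I) • a r)
    (fun r => (((2 * Real.pi : ℝ) : ℂ) * Complex.I) • a' r)
    (fun r => by exact (hd r).const_smul (((2 * Real.pi : ℝ) : ℂ) * Complex.I)) (hc.const_smul _) t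
  rw [key, map_smul, smul_eq_mul]
  push_cast
  ring
end

section
/- Let A be a complex unital Banach algebra with a continuous trace τ, and let u : [0,1] × [0,1] → A be a C² family of invertible elements, (s,t) ↦ u_s(t). Then ∂_s τ((∂_t u_s(t)) u_s(t)^{−1}) = ∂_t τ((∂_s u_s(t)) u_s(t)^{−1}) for all (s,t). -/
private lemma transgression_key {A : Type*} [NormedRing A] [NormedAlgebra ℂ A]
    [CompleteSpace A] (τ : A →L[ℂ] ℂ) (f : ℝ × ℝ → A) (hf : ContDiff ℝ 2 f)
    (hu : ∀ p, IsUnit (f p)) (γ : ℝ → ℝ × ℝ) (r : ℝ) (v : ℝ × ℝ)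
    (hγ : HasDerivAt γ v r) (d : ℝ × ℝ) :
    HasDerivAt (fun r' => τ (fderiv ℝ f (γ r') d * Ring.inverse (f (γ r'))))
      (τ (fderiv ℝ (fderiv ℝ f) (γ r) v d * Ring.inverse (f (γ r))
        + fderiv ℝ f (γ r) d *
          -(Ring.inverse (f (γ r)) * fderiv ℝ f (γ r) v * Ring.inverse (f (γ r))))) r := by
  have hfd : Differentiable ℝ f := hf.differentiable two_ne_zero
  have hf' : Differentiable ℝ (fderiv ℝ f) :=
    (hf.fderiv_right (m := 1) (by norm_num)).differentiable one_ne_zero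
  set p := γ r with hp
  -- derivative of r' ↦ f (γ r')
  have hfg : HasDerivAt (fun r' => f (γ r')) (fderiv ℝ f p v) r :=
    (hfd p).hasFDerivAt.comp_hasDerivAt r hγ
  -- derivative of r' ↦ fderiv ℝ f (γ r') d
  have h1 : HasDerivAt (fun r' => fderiv ℝ f (γ r')) (fderiv ℝ (fderiv ℝ f) p v) r :=
    (hf' p).hasFDerivAt.comp_hasDerivAt r hγ
  have h2 : HasDerivAt (fun r' => fderiv ℝ f (γ r') d) (fderiv ℝ (fderiv ℝ f) p v d) r := by
    simpa using h1.clm_apply (hasDerivAt_const r d)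
  -- derivative of r' ↦ Ring.inverse (f (γ r'))
  have hx : ((hu p).unit : A) = f p := (hu p).unit_spec
  have hinv : HasFDerivAt (Ring.inverse : A → A)
      (-(ContinuousLinearMap.mulLeftRight ℝ A
        (Ring.inverse (f p))) (Ring.inverse (f p))) (f p) := by
    have := hasFDerivAt_ringInverse (𝕜 := ℝ) (hu p).unit
    rwa [hx, ← Ring.inverse_unit (hu p).unit, hx] at this
  have h4 : HasDerivAt (fun r' => Ring.inverse (f (γ r')))
      (-(Ring.inverse (f p) * fderiv ℝ f p v * Ring.inverse (f p))) r := by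
    simpa [Function.comp_def] using hinv.comp_hasDerivAt r hfg
  have h5 := h2.mul h4
  have h6 := (τ.restrictScalars ℝ).hasFDerivAt.comp_hasDerivAt r h5
  simpa [Function.comp_def, mul_comm, ← hp] using h6

/-- transgression symmetry: for a `C²` family of invertibles
`(s,t) ↦ u_s(t)` in a complex unital Banach algebra with continuous trace `τ`,
`∂_s τ((∂_t u)u⁻¹) = ∂_t τ((∂_s u)u⁻¹)`. -/
theorem transgression_symmetry {A : Type*} [NormedRing A] [NormedAlgebra ℂ A]
    [CompleteSpace A] (τ : A →L[ℂ] ℂ) (hτ : ∀ x y : A, τ (x * y) = τ (y * x))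
    (u : ℝ → ℝ → A) (hC2 : ContDiff ℝ 2 (fun p : ℝ × ℝ => u p.1 p.2))
    (hu : ∀ s t, IsUnit (u s t)) (s t : ℝ) :
    deriv (fun s' => τ (deriv (fun t' => u s' t') t * Ring.inverse (u s' t))) s =
      deriv (fun t' => τ (deriv (fun s' => u s' t') s * Ring.inverse (u s t'))) t := by
  set f : ℝ × ℝ → A := fun p => u p.1 p.2 with hfdef
  have hu' : ∀ p : ℝ × ℝ, IsUnit (f p) := fun p => hu p.1 p.2
  have hfd : Differentiable ℝ f := hC2.differentiable two_ne_zero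
  have hf' : Differentiable ℝ (fderiv ℝ f) :=
    (hC2.fderiv_right (m := 1) (by norm_num)).differentiable one_ne_zero
  -- identify partial derivatives with fderiv applied to basis directions
  have hdt : ∀ s' : ℝ, deriv (fun t' => u s' t') t = fderiv ℝ f (s', t) ((0 : ℝ), (1 : ℝ)) := by
    intro s'
    have h : HasDerivAt (fun t' => u s' t') (fderiv ℝ f (s', t) ((0 : ℝ), (1 : ℝ))) t := by
      simpa [Function.comp_def, hfdef] using
        (hfd (s', t)).hasFDerivAt.comp_hasDerivAt t
          (HasDerivAt.prodMk (hasDerivAt_const t s') (hasDerivAt_id t))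
    exact h.deriv
  have hds : ∀ t' : ℝ, deriv (fun s' => u s' t') s = fderiv ℝ f (s, t') ((1 : ℝ), (0 : ℝ)) := by
    intro t'
    have h : HasDerivAt (fun s' => u s' t') (fderiv ℝ f (s, t') ((1 : ℝ), (0 : ℝ))) s := by
      simpa [Function.comp_def, hfdef] using
        (hfd (s, t')).hasFDerivAt.comp_hasDerivAt s
          (HasDerivAt.prodMk (hasDerivAt_id s) (hasDerivAt_const s t'))
    exact h.deriv
  have e1 : (fun s' => τ (deriv (fun t' => u s' t') t * Ring.inverse (u s' t)))
      = fun s' => τ (fderiv ℝ f (s', t) ((0 : ℝ), (1 : ℝ)) * Ring.inverse (f (s', t))) := by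
    funext s'; rw [hdt s']
  have e2 : (fun t' => τ (deriv (fun s' => u s' t') s * Ring.inverse (u s t')))
      = fun t' => τ (fderiv ℝ f (s, t') ((1 : ℝ), (0 : ℝ)) * Ring.inverse (f (s, t'))) := by
    funext t'; rw [hds t']
  rw [e1, e2]
  have k1 := (transgression_key τ f hC2 hu' (fun s' => (s', t)) s ((1 : ℝ), (0 : ℝ))
    (HasDerivAt.prodMk (hasDerivAt_id s) (hasDerivAt_const s t)) ((0 : ℝ), (1 : ℝ))).deriv
  have k2 := (transgression_key τ f hC2 hu' (fun t' => (s, t')) t ((0 : ℝ), (1 : ℝ))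
    (HasDerivAt.prodMk (hasDerivAt_const t s) (hasDerivAt_id t)) ((1 : ℝ), (0 : ℝ))).deriv
  rw [k1, k2]
  set p : ℝ × ℝ := (s, t)
  set w : A := Ring.inverse (f p)
  have hsym : fderiv ℝ (fderiv ℝ f) p ((1 : ℝ), (0 : ℝ)) ((0 : ℝ), (1 : ℝ))
      = fderiv ℝ (fderiv ℝ f) p ((0 : ℝ), (1 : ℝ)) ((1 : ℝ), (0 : ℝ)) :=
    second_derivative_symmetric (fun y => (hfd y).hasFDerivAt) (hf' p).hasFDerivAt _ _
  have hcomm : τ (fderiv ℝ f p ((0 : ℝ), (1 : ℝ)) * -(w * fderiv ℝ f p ((1 : ℝ), (0 : ℝ)) * w))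
      = τ (fderiv ℝ f p ((1 : ℝ), (0 : ℝ)) * -(w * fderiv ℝ f p ((0 : ℝ), (1 : ℝ)) * w)) := by
    have h := hτ (fderiv ℝ f p ((0 : ℝ), (1 : ℝ)) * w) (fderiv ℝ f p ((1 : ℝ), (0 : ℝ)) * w)
    simp only [mul_neg, map_neg, neg_inj]
    calc τ (fderiv ℝ f p ((0:ℝ),(1:ℝ)) * (w * fderiv ℝ f p ((1:ℝ),(0:ℝ)) * w))
        = τ ((fderiv ℝ f p ((0:ℝ),(1:ℝ)) * w) * (fderiv ℝ f p ((1:ℝ),(0:ℝ)) * w)) := by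
          simp only [mul_assoc]
      _ = τ ((fderiv ℝ f p ((1:ℝ),(0:ℝ)) * w) * (fderiv ℝ f p ((0:ℝ),(1:ℝ)) * w)) := h
      _ = τ (fderiv ℝ f p ((1:ℝ),(0:ℝ)) * (w * fderiv ℝ f p ((0:ℝ),(1:ℝ)) * w)) := by
          simp only [mul_assoc]
  rw [map_add, map_add, hsym, hcomm]
end
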